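/- The functions f = e^{x₇}, q₂ = -√2 x₄, q₃ = √2(x₅/2 - x₆) + (-x₄ + x₅ + x₇/√2)x₆e^{-x₇}, q₄ = x₅ - 2x₆ + x₆e^{-x₇}, s₂ = 0, s₃ = -x₄/√2 + x₃ satisfy equation (Eb1) of the paper: (s₂ - q₃)_{x₂} = 0, (s₂ - q₃)_{x₃} = 0, and (s₂ - q₃)_{x₄} = -(q₄)_{x₇}. -/

import Mathlib

noncomputable section

/-- Partial derivative of `f` at `x` in the `i`-th coordinate direction. -/
def pd {n : ℕ} (i : Fin n) (f : (Fin n → ℝ) → ℝ) (x : Fin n → ℝ) : ℝ :=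
  fderiv ℝ f x (Pi.single i 1)

/- Coordinates on ℝ⁷: index i ↔ x_{i+1}. -/

def q₃14 (x : Fin 7 → ℝ) : ℝ :=
  Real.sqrt 2 * (x 4 / 2 - x 5) + (-x 3 + x 4 + x 6 / Real.sqrt 2) * x 5 * Real.exp (-x 6)
def q₄14 (x : Fin 7 → ℝ) : ℝ := x 4 - 2 * x 5 + x 5 * Real.exp (-x 6)
def s₂14 (_x : Fin 7 → ℝ) : ℝ := 0
def s₃14 (x : Fin 7 → ℝ) : ℝ := -x 3 / Real.sqrt 2 + x 2
def f14 (x : Fin 7 → ℝ) : ℝ := Real.exp (x 6)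
def q₂14 (x : Fin 7 → ℝ) : ℝ := -Real.sqrt 2 * x 3

lemma pd_sq3 (x : Fin 7 → ℝ) (i : Fin 7) :
    pd i (fun y => s₂14 y - q₃14 y) x =
      -(Real.sqrt 2 * ((if (4:Fin 7) = i then (2:ℝ)⁻¹ else 0) - if (5:Fin 7) = i then 1 else 0) +
        ((-if (6:Fin 7) = i then (-x 3 + x 4 + x 6 * (Real.sqrt 2)⁻¹) * x 5 * Real.exp (-x 6) else 0) +
          ((if (5:Fin 7) = i then Real.exp (-x 6) * (-x 3 + x 4 + x 6 * (Real.sqrt 2)⁻¹) else 0) +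
            (((-if (3:Fin 7) = i then Real.exp (-x 6) * x 5 else 0) +
              if (4:Fin 7) = i then Real.exp (-x 6) * x 5 else 0) +
              if (6:Fin 7) = i then Real.exp (-x 6) * (x 5 * (Real.sqrt 2)⁻¹) else 0)))) := by
  have h3 := (ContinuousLinearMap.proj (R := ℝ) (φ := fun _ : Fin 7 => ℝ) 3).hasFDerivAt (x := x)
  have h4 := (ContinuousLinearMap.proj (R := ℝ) (φ := fun _ : Fin 7 => ℝ) 4).hasFDerivAt (x := x)
  have h5 := (ContinuousLinearMap.proj (R := ℝ) (φ := fun _ : Fin 7 => ℝ) 5).hasFDerivAt (x := x)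
  have h6 := (ContinuousLinearMap.proj (R := ℝ) (φ := fun _ : Fin 7 => ℝ) 6).hasFDerivAt (x := x)
  have e : (fun y => s₂14 y - q₃14 y) = fun y : Fin 7 → ℝ =>
      -(Real.sqrt 2 * (y 4 * (2:ℝ)⁻¹ - y 5)
        + (-y 3 + y 4 + y 6 * (Real.sqrt 2)⁻¹) * y 5 * Real.exp (-y 6)) := by
    funext y; simp [s₂14, q₃14, div_eq_mul_inv]
  have hq : HasFDerivAt (fun y : Fin 7 → ℝ =>
      Real.sqrt 2 * (y 4 * (2:ℝ)⁻¹ - y 5)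
        + (-y 3 + y 4 + y 6 * (Real.sqrt 2)⁻¹) * y 5 * Real.exp (-y 6)) _ x :=
    (((h4.mul_const _).sub h5).const_mul (Real.sqrt 2)).add
      ((((h3.neg.add h4).add (h6.mul_const _)).mul h5).mul h6.neg.exp)
  unfold pd
  rw [e, fderiv_fun_neg, hq.fderiv]
  simp [Pi.single_apply]

lemma pd_q4 (x : Fin 7 → ℝ) :
    pd 6 q₄14 x = -(x 5 * Real.exp (-x 6)) := by
  have h4 := (ContinuousLinearMap.proj (R := ℝ) (φ := fun _ : Fin 7 => ℝ) 4).hasFDerivAt (x := x)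
  have h5 := (ContinuousLinearMap.proj (R := ℝ) (φ := fun _ : Fin 7 => ℝ) 5).hasFDerivAt (x := x)
  have h6 := (ContinuousLinearMap.proj (R := ℝ) (φ := fun _ : Fin 7 => ℝ) 6).hasFDerivAt (x := x)
  have hq : HasFDerivAt (fun y : Fin 7 → ℝ => y 4 - 2 * y 5 + y 5 * Real.exp (-y 6)) _ x :=
    (h4.sub (h5.const_mul 2)).add (h5.mul h6.neg.exp)
  have e : q₄14 = fun y : Fin 7 → ℝ => y 4 - 2 * y 5 + y 5 * Real.exp (-y 6) := rfl
  unfold pd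
  rw [e, hq.fderiv]
  simp [Pi.single_apply]

/-- The explicit functions of Section 3.2 satisfy equation (Eb1):
(s₂-q₃)_{x₂} = 0, (s₂-q₃)_{x₃} = 0, (s₂-q₃)_{x₄} = -(q₄)_{x₇}. -/
theorem Eb1_holds :
    (∀ x, pd 1 (fun y => s₂14 y - q₃14 y) x = 0) ∧
    (∀ x, pd 2 (fun y => s₂14 y - q₃14 y) x = 0) ∧
    (∀ x, pd 3 (fun y => s₂14 y - q₃14 y) x = -(pd 6 q₄14 x)) := by
  refine ⟨fun x => ?_, fun x => ?_, fun x => ?_⟩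
  · rw [pd_sq3]; simp
  · rw [pd_sq3]; simp
  · rw [pd_sq3, pd_q4]; simp; ring
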